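/- arXiv:0902.1357 — 2 statements merged into one kernel-verified Lean document; each statement's English description precedes it below -/
import Mathlib

section
/- Let M be a ℤ-module, ι : M → M ⊗_ℚ the natural map, and A an open sub-semigroup of M, meaning: for any a ∈ A and x ∈ M there is a positive integer n with n·a + x ∈ A. Then Cone_ℚ(ι(A)) is an open set in M ⊗_ℤ ℚ in the strong topology. -/
open TensorProduct

/-- `U` is open in the strong topology on `V`: its preimage under every linear map
from a finite-dimensional coordinate space `K^n` is open. -/
def StrongOpen (K : Type*) [Field K] [LinearOrder K] [IsStrictOrderedRing K] [TopologicalSpace K]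
    {V : Type*} [AddCommGroup V] [Module K V] (U : Set V) : Prop :=
  ∀ (n : ℕ) (φ : (Fin n → K) →ₗ[K] V), IsOpen (φ ⁻¹' U)

/-- The cone generated by `S`: positive linear combinations of elements of `S`. -/
def coneGen (K : Type*) [Field K] [LinearOrder K] [IsStrictOrderedRing K] {V : Type*} [AddCommGroup V]
    [Module K V] (S : Set V) : Set V :=
  { v | ∃ (n : ℕ) (a : Fin (n + 1) → V) (l : Fin (n + 1) → K),
      (∀ i, a i ∈ S) ∧ (∀ i, 0 < l i) ∧ v = ∑ i, l i • a i }

section ConeLemmas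

variable {K : Type*} [Field K] [LinearOrder K] [IsStrictOrderedRing K] {V : Type*} [AddCommGroup V] [Module K V]
  {S : Set V}

lemma mem_coneGen_single {s : V} (hs : s ∈ S) {c : K} (hc : 0 < c) :
    c • s ∈ coneGen K S :=
  ⟨0, ![s], ![c], by simp [hs], by simp [hc], by simp⟩

lemma coneGen_cons {s v : V} {c : K} (hs : s ∈ S) (hc : 0 < c)
    (hv : v ∈ coneGen K S) : c • s + v ∈ coneGen K S := by
  obtain ⟨n, a, l, ha, hl, rfl⟩ := hv
  refine ⟨n + 1, Fin.cons s a, Fin.cons c l, ?_, ?_, ?_⟩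
  · intro i; induction i using Fin.cases <;> simp [hs, ha]
  · intro i; induction i using Fin.cases <;> simp [hc, hl]
  · simp [Fin.sum_univ_succ]

lemma coneGen_add_mem {u v : V} (hu : u ∈ coneGen K S) (hv : v ∈ coneGen K S) :
    u + v ∈ coneGen K S := by
  obtain ⟨n, a, l, ha, hl, rfl⟩ := hu
  induction n with
  | zero =>
    rw [Fin.sum_univ_one]
    exact coneGen_cons (ha 0) (hl 0) hv
  | succ m ih =>
    rw [Fin.sum_univ_succ, add_assoc]
    exact coneGen_cons (ha 0) (hl 0)
      (ih (fun i => a i.succ) (fun i => l i.succ) (fun i => ha i.succ) (fun i => hl i.succ))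

lemma coneGen_smul_mem {v : V} {c : K} (hc : 0 < c) (hv : v ∈ coneGen K S) :
    c • v ∈ coneGen K S := by
  obtain ⟨n, a, l, ha, hl, rfl⟩ := hv
  exact ⟨n, a, fun i => c * l i, ha, fun i => mul_pos hc (hl i), by
    rw [Finset.smul_sum]; simp [smul_smul]⟩

lemma coneGen_sum_mem {ι : Type*} {s : Finset ι} (hs : s.Nonempty) {f : ι → V}
    (h : ∀ i ∈ s, f i ∈ coneGen K S) : ∑ i ∈ s, f i ∈ coneGen K S := by
  induction s using Finset.cons_induction with
  | empty => exact absurd hs (by simp)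
  | cons a t hat ih =>
    rw [Finset.sum_cons]
    rcases t.eq_empty_or_nonempty with rfl | ht
    · simpa using h a (Finset.mem_cons_self a ∅)
    · exact coneGen_add_mem (h a (Finset.mem_cons_self a t))
        (ih ht fun i hi => h i (Finset.mem_cons_of_mem hi))

/-- Convexity-style interpolation: if `v ∈ C` and `v + ε • w ∈ C`, then
`v + t • w ∈ C` for `0 < t < ε`. -/
lemma coneGen_between {v w : V} {ε t : K} (hv : v ∈ coneGen K S)
    (hu : v + ε • w ∈ coneGen K S) (ht0 : 0 < t) (htε : t < ε) :
    v + t • w ∈ coneGen K S := by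
  have hε : (0 : K) < ε := ht0.trans htε
  have key : v + t • w = (t / ε) • (v + ε • w) + ((ε - t) / ε) • v := by
    match_scalars <;> field_simp <;> ring
  rw [key]
  exact coneGen_add_mem (coneGen_smul_mem (div_pos ht0 hε) hu)
    (coneGen_smul_mem (div_pos (by linarith) hε) hv)

end ConeLemmas

section Tensor

variable {M : Type*} [AddCommGroup M]

lemma tmul_zsmul (k : ℤ) (x : M) :
    (1 : ℚ) ⊗ₜ[ℤ] (k • x) = (k : ℚ) • ((1 : ℚ) ⊗ₜ[ℤ] x) := by
  rw [← smul_tmul, smul_tmul']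
  congr 1

lemma tmul_nsmul (k : ℕ) (x : M) :
    (1 : ℚ) ⊗ₜ[ℤ] (k • x) = (k : ℚ) • ((1 : ℚ) ⊗ₜ[ℤ] x) := by
  have : (k : ℤ) • x = k • x := natCast_zsmul x k
  rw [← this, tmul_zsmul]
  norm_num

/-- Every element of `ℚ ⊗[ℤ] M` has a positive integer multiple of the form `1 ⊗ x`. -/
lemma exists_tensor_rep (w : ℚ ⊗[ℤ] M) :
    ∃ (N : ℕ) (x : M), 0 < N ∧ (N : ℚ) • w = (1 : ℚ) ⊗ₜ[ℤ] x := by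
  induction w using TensorProduct.induction_on with
  | zero => exact ⟨1, 0, one_pos, by simp⟩
  | tmul q x =>
    refine ⟨q.den, q.num • x, q.pos, ?_⟩
    rw [tmul_zsmul, smul_tmul', smul_tmul', smul_eq_mul, smul_eq_mul, mul_one,
      mul_comm, Rat.mul_den_eq_num]
  | add w₁ w₂ h₁ h₂ =>
    obtain ⟨N₁, x₁, hN₁, e₁⟩ := h₁
    obtain ⟨N₂, x₂, hN₂, e₂⟩ := h₂
    refine ⟨N₁ * N₂, N₂ • x₁ + N₁ • x₂, Nat.mul_pos hN₁ hN₂, ?_⟩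
    rw [tmul_add, tmul_nsmul, tmul_nsmul, ← e₁, ← e₂, smul_add]
    push_cast
    rw [smul_smul, smul_smul, mul_comm (N₂ : ℚ) (N₁ : ℚ)]

end Tensor

section Absorb

variable {M : Type*} [AddCommGroup M] {A : Set M}

/-- The key absorption property: the cone absorbs a little bit of every vector. -/
lemma coneGen_absorb
    (hopen : ∀ a ∈ A, ∀ x : M, ∃ n : ℕ, 0 < n ∧ n • a + x ∈ A)
    {v : ℚ ⊗[ℤ] M}
    (hv : v ∈ coneGen ℚ ((fun x : M => ((1 : ℚ) ⊗ₜ[ℤ] x : ℚ ⊗[ℤ] M)) '' A))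
    (w : ℚ ⊗[ℤ] M) :
    ∃ ε : ℚ, 0 < ε ∧
      v + ε • w ∈ coneGen ℚ ((fun x : M => ((1 : ℚ) ⊗ₜ[ℤ] x : ℚ ⊗[ℤ] M)) '' A) := by
  obtain ⟨n, a, l, ha, hl, rfl⟩ := hv
  obtain ⟨b, hbA, hb⟩ := ha 0
  obtain ⟨N, x, hN, hNx⟩ := exists_tensor_rep w
  obtain ⟨m, hm, hmA⟩ := hopen b hbA x
  have hl0 := hl 0
  have hmQ : (0 : ℚ) < (m : ℚ) := by exact_mod_cast hm
  have hNQ : (0 : ℚ) < (N : ℚ) := by exact_mod_cast hN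
  refine ⟨l 0 * N / (2 * m), by positivity, ?_⟩
  have key : (∑ i, l i • a i) + (l 0 * N / (2 * m)) • w
      = (l 0 / (2 * m)) • ((1 : ℚ) ⊗ₜ[ℤ] (m • b + x))
        + ((l 0 / 2) • a 0 + ∑ i : Fin n, l i.succ • a i.succ) := by
    rw [Fin.sum_univ_succ, ← hb, tmul_add, tmul_nsmul, ← hNx]
    match_scalars <;> field_simp <;> ring
  rw [key]
  refine coneGen_cons ⟨m • b + x, hmA, rfl⟩ (by positivity)
    ⟨n, a, Fin.cons (l 0 / 2) (fun i => l i.succ), ha, ?_, by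
      rw [Fin.sum_univ_succ]; simp⟩
  intro i
  induction i using Fin.cases with
  | zero => simp only [Fin.cons_zero]; positivity
  | succ j => simpa using hl j.succ

/-- Two-sided absorption. -/
lemma coneGen_absorb_interval
    (hopen : ∀ a ∈ A, ∀ x : M, ∃ n : ℕ, 0 < n ∧ n • a + x ∈ A)
    {v : ℚ ⊗[ℤ] M}
    (hv : v ∈ coneGen ℚ ((fun x : M => ((1 : ℚ) ⊗ₜ[ℤ] x : ℚ ⊗[ℤ] M)) '' A))
    (w : ℚ ⊗[ℤ] M) :
    ∃ ε : ℚ, 0 < ε ∧ ∀ t : ℚ, |t| < ε →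
      v + t • w ∈ coneGen ℚ ((fun x : M => ((1 : ℚ) ⊗ₜ[ℤ] x : ℚ ⊗[ℤ] M)) '' A) := by
  obtain ⟨ε₁, hε₁, h₁⟩ := coneGen_absorb hopen hv w
  obtain ⟨ε₂, hε₂, h₂⟩ := coneGen_absorb hopen hv (-w)
  refine ⟨min ε₁ ε₂, lt_min hε₁ hε₂, fun t ht => ?_⟩
  rcases lt_trichotomy t 0 with h | h | h
  · have heq : v + t • w = v + (-t) • (-w) := by rw [smul_neg, neg_smul, neg_neg]
    rw [heq]
    refine coneGen_between hv h₂ (by linarith) ?_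
    calc -t = |t| := (abs_of_neg h).symm
    _ < min ε₁ ε₂ := ht
    _ ≤ ε₂ := min_le_right _ _
  · simpa [h] using hv
  · refine coneGen_between hv h₁ h ?_
    calc t = |t| := (abs_of_pos h).symm
    _ < min ε₁ ε₂ := ht
    _ ≤ ε₁ := min_le_left _ _

end Absorb

theorem coneGen_strongOpen_of_open_subsemigroup (M : Type*) [AddCommGroup M]
    (A : Set M) (hA : ∀ x ∈ A, ∀ y ∈ A, x + y ∈ A)
    (hopen : ∀ a ∈ A, ∀ x : M, ∃ n : ℕ, 0 < n ∧ n • a + x ∈ A) :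
    StrongOpen ℚ (coneGen ℚ ((fun x : M => ((1 : ℚ) ⊗ₜ[ℤ] x : ℚ ⊗[ℤ] M)) '' A)) := by
  intro n φ
  rw [Metric.isOpen_iff]
  intro p hp
  simp only [Set.mem_preimage] at hp
  set w : Fin n → ℚ ⊗[ℤ] M := fun i => φ (fun j => if i = j then (1 : ℚ) else 0) with hw
  choose ε hε0 hε using fun i => coneGen_absorb_interval hopen hp (w i)
  obtain ⟨δ, hδ0, hδ⟩ : ∃ δ : ℚ, 0 < δ ∧ ∀ i, (n : ℚ) * δ ≤ ε i := by
    rcases isEmpty_or_nonempty (Fin n) with h | h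
    · exact ⟨1, one_pos, fun i => (h.false i).elim⟩
    · have hn : 0 < n := Fin.pos_iff_nonempty.2 h
      have hnQ : (0 : ℚ) < n := by exact_mod_cast hn
      refine ⟨Finset.univ.inf' Finset.univ_nonempty (fun i => ε i / (n + 1)), ?_, ?_⟩
      · rw [Finset.lt_inf'_iff]
        intro i _
        have := hε0 i
        positivity
      · intro i
        have h1 : Finset.univ.inf' Finset.univ_nonempty (fun i => ε i / (n + 1))
            ≤ ε i / (n + 1) := Finset.inf'_le _ (Finset.mem_univ i)
        have h2 : (n : ℚ) * (ε i / (n + 1)) ≤ ε i := by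
          rw [mul_div_assoc']
          rw [div_le_iff₀ (by positivity)]
          nlinarith [hε0 i]
        nlinarith
  refine ⟨(δ : ℝ), by exact_mod_cast hδ0, fun q hq => ?_⟩
  rw [Metric.mem_ball] at hq
  have hq' : ∀ i, |q i - p i| < δ := by
    intro i
    have h1 := (dist_pi_lt_iff (by exact_mod_cast hδ0)).1 hq i
    rw [Rat.dist_eq] at h1
    exact_mod_cast h1
  show φ q ∈ coneGen ℚ _
  have hφq : φ q = φ p + ∑ i, (q i - p i) • w i := by
    have h2 : φ q = φ p + φ (q - p) := by rw [← map_add, add_sub_cancel]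
    rw [h2, LinearMap.pi_apply_eq_sum_univ φ (q - p)]
    simp [hw]
  rcases isEmpty_or_nonempty (Fin n) with hE | hNE
  · rw [hφq]
    simpa using hp
  · have hn : 0 < n := Fin.pos_iff_nonempty.2 hNE
    have hnQ : ((n : ℚ)) ≠ 0 := by positivity
    have key : φ q = ∑ i, ((n : ℚ))⁻¹ • (φ p + ((n : ℚ) * (q i - p i)) • w i) := by
      rw [hφq]
      simp only [smul_add, Finset.sum_add_distrib, smul_smul, Finset.sum_const,
        Finset.card_univ, Fintype.card_fin]
      congr 1
      · rw [← Nat.cast_smul_eq_nsmul ℚ, smul_smul, mul_inv_cancel₀ hnQ, one_smul]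
      · exact Finset.sum_congr rfl fun i _ => by rw [inv_mul_cancel_left₀ hnQ]
    rw [key]
    refine coneGen_sum_mem Finset.univ_nonempty fun i _ => ?_
    refine coneGen_smul_mem (by positivity) ?_
    refine hε i _ ?_
    have hb : |(n : ℚ) * (q i - p i)| = (n : ℚ) * |q i - p i| := by
      rw [abs_mul, abs_of_nonneg (by positivity : (0:ℚ) ≤ (n:ℚ))]
    rw [hb]
    calc (n : ℚ) * |q i - p i| < (n : ℚ) * δ := by
          apply mul_lt_mul_of_pos_left (hq' i)
          exact_mod_cast hn
    _ ≤ ε i := hδ i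
end

section
/- Let M be a finitely generated free ℤ-module and K ⊆ M. The following are equivalent: (1) K is a convex lattice, i.e., for every m ≥ 1, ⟨K⟩_ℤ ∩ (1/m)(m∗K) ⊆ K; (2) K = ⟨K⟩_ℤ ∩ Conv_ℝ(K); (3) there exist a ℤ-submodule N of M and a convex set Δ in M ⊗ ℝ with K = N ∩ Δ. -/
open TensorProduct

/-- The `m`-fold sum `m ∗ K = { x₁ + ⋯ + x_m : xᵢ ∈ K }`. -/
def foldSum {M : Type*} [AddCommMonoid M] (m : ℕ) (K : Set M) : Set M :=
  { x | ∃ f : Fin m → M, (∀ i, f i ∈ K) ∧ x = ∑ i, f i }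

lemma foldSum_add_mem {M : Type*} [AddCommMonoid M] {K : Set M} {p q : ℕ} {u v : M}
    (hu : u ∈ foldSum p K) (hv : v ∈ foldSum q K) : u + v ∈ foldSum (p + q) K := by
  obtain ⟨f, hf, rfl⟩ := hu
  obtain ⟨g, hg, rfl⟩ := hv
  refine ⟨Fin.append f g, fun i => ?_, ?_⟩
  · exact Fin.addCases (fun i => by simpa [Fin.append_left] using hf i)
      (fun i => by simpa [Fin.append_right] using hg i) i
  · rw [Fin.sum_univ_add]; simp

lemma nsmul_mem_foldSum {M : Type*} [AddCommMonoid M] {K : Set M} {y : M} (hy : y ∈ K) (a : ℕ) :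
    a • y ∈ foldSum a K :=
  ⟨fun _ => y, fun _ => hy, by simp⟩

lemma sum_nsmul_mem_foldSum {M : Type*} [AddCommMonoid M] {K : Set M} {ι : Type*}
    [DecidableEq ι] (s : Finset ι) (a : ι → ℕ) (y : ι → M) (hy : ∀ i ∈ s, y i ∈ K) :
    (∑ i ∈ s, a i • y i) ∈ foldSum (∑ i ∈ s, a i) K := by
  induction s using Finset.induction with
  | empty => exact ⟨fun i => 0, fun i => absurd i.2 (by simp), by simp⟩
  | @insert j s' hj ih =>
    rw [Finset.sum_insert hj, Finset.sum_insert hj]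
    exact foldSum_add_mem (nsmul_mem_foldSum (hy j (Finset.mem_insert_self j s')) (a j))
      (ih fun i hi => hy i (Finset.mem_insert_of_mem hi))


/-- If a rational vector is a real linear combination of rational vectors, it is also
a rational linear combination of them. -/
lemma exists_rat_combination {κ : Type*} [Fintype κ] [DecidableEq κ] {ι : Type*} [Fintype ι]
    (u : ι → κ → ℚ) (t0 : κ → ℚ) (w : ι → ℝ)
    (h : ∑ i, w i • (fun k => ((u i k : ℝ))) = fun k => ((t0 k : ℝ))) :
    ∃ q : ι → ℚ, ∑ i, q i • u i = t0 := by
  rw [← Submodule.mem_span_range_iff_exists_fun]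
  by_contra ht
  obtain ⟨f, hf, hmap⟩ := Submodule.exists_dual_map_eq_bot_of_notMem ht inferInstance
  -- every u i is killed by f
  have hfu : ∀ i, f (u i) = 0 := by
    intro i
    have : f (u i) ∈ (Submodule.span ℚ (Set.range u)).map f :=
      Submodule.mem_map_of_mem (Submodule.subset_span ⟨i, rfl⟩)
    rwa [hmap, Submodule.mem_bot] at this
  -- expansion of f in coordinates
  have hexp : ∀ g : κ → ℚ, f g = ∑ k, g k * f (Pi.single k 1) := by
    intro g
    conv_lhs => rw [← Finset.univ_sum_single g, map_sum]
    refine Finset.sum_congr rfl fun k _ => ?_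
    have : Pi.single k (g k) = g k • (Pi.single k (1 : ℚ) : κ → ℚ) := by
      rw [← Pi.single_smul, smul_eq_mul, mul_one]
    rw [this, map_smul, smul_eq_mul]
  -- real linear functional with matching coefficients
  set F : (κ → ℝ) →ₗ[ℝ] ℝ :=
    ∑ k, ((f (Pi.single k 1) : ℝ) • LinearMap.proj k) with hF
  have hFcast : ∀ g : κ → ℚ, F (fun k => (g k : ℝ)) = (f g : ℝ) := by
    intro g
    rw [hexp g]
    push_cast
    simp [hF, mul_comm]
  have := congrArg F h
  rw [map_sum] at this
  simp only [map_smul, hFcast, smul_eq_mul] at this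
  simp only [hfu, Rat.cast_zero, mul_zero, Finset.sum_const_zero] at this
  exact hf (by exact_mod_cast this.symm)

lemma exists_nsmul_mem_foldSum {M : Type*} [AddCommGroup M] [Module.Free ℤ M]
    [Module.Finite ℤ M] {K : Set M} {x : M}
    (hx : ((1:ℝ) ⊗ₜ[ℤ] x : ℝ ⊗[ℤ] M) ∈
      convexHull ℝ ((fun y : M => ((1:ℝ) ⊗ₜ[ℤ] y : ℝ ⊗[ℤ] M)) '' K)) :
    ∃ m : ℕ, 0 < m ∧ m • x ∈ foldSum m K := by
  classical
  set κ := Module.Free.ChooseBasisIndex ℤ M with hκ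
  set b : Module.Basis κ ℤ M := Module.Free.chooseBasis ℤ M with hb
  set bR : Module.Basis κ ℝ (ℝ ⊗[ℤ] M) := b.baseChange ℝ with hbR
  obtain ⟨ι, Iinst, z, w, hzs, hAI, hw0, hw1, hwz⟩ := eq_pos_convex_span_of_mem_convexHull hx
  -- choose preimages in K
  have hzim : ∀ i, ∃ y ∈ K, (1:ℝ) ⊗ₜ[ℤ] y = z i := fun i => by
    obtain ⟨y, hy, hyz⟩ := hzs ⟨i, rfl⟩
    exact ⟨y, hy, hyz⟩
  choose y hyK hyz using hzim
  -- coordinates of the base-changed basis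
  have hrepr : ∀ (v : M) (k : κ), bR.repr ((1:ℝ) ⊗ₜ[ℤ] v) k = ((b.repr v k : ℤ) : ℝ) := by
    intro v k
    rw [hbR, Module.Basis.baseChange_repr_tmul]
    simp
  -- coordinates over Option κ (extra coordinate `none` records the sum of weights)
  set u : ι → Option κ → ℚ := fun i o => o.elim 1 (fun k => ((b.repr (y i) k : ℤ) : ℚ)) with hu
  set t0 : Option κ → ℚ := fun o => o.elim 1 (fun k => ((b.repr x k : ℤ) : ℚ)) with ht0
  have hreal : ∑ i, w i • (fun o => ((u i o : ℝ))) = fun o => ((t0 o : ℝ)) := by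
    funext o
    rw [Finset.sum_apply]
    cases o with
    | none => simpa [hu, ht0] using hw1
    | some k =>
      have h2 := congrArg (fun v => (bR.repr v) k) hwz
      simp only [map_sum, map_smul, Finsupp.coe_finset_sum, Finsupp.coe_smul,
        Finset.sum_apply, Pi.smul_apply, smul_eq_mul] at h2
      have h3 : ∀ i, (bR.repr (z i)) k = ((b.repr (y i) k : ℤ) : ℝ) := fun i => by
        rw [← hyz i, hrepr]
      calc ∑ i, (w i • fun o => ((u i o : ℝ))) (some k)
          = ∑ i, w i * (bR.repr (z i)) k := by
            refine Finset.sum_congr rfl fun i _ => ?_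
            rw [h3 i]; simp [hu]
        _ = (bR.repr ((1:ℝ) ⊗ₜ[ℤ] x)) k := h2
        _ = ((t0 (some k) : ℝ)) := by rw [hrepr]; simp [ht0]
  obtain ⟨q, hq⟩ := exists_rat_combination u t0 w hreal
  -- uniqueness: q coincides with w, hence q is nonnegative
  have hq1 : ∑ i, q i = 1 := by
    have := congrFun hq none
    simpa [hu, ht0] using this
  have hqco : ∀ k, ∑ i, q i * ((b.repr (y i) k : ℤ) : ℚ) = ((b.repr x k : ℤ) : ℚ) := by
    intro k
    have := congrFun hq (some k)
    simpa [hu, ht0] using this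
  have hqw : ∀ i, (q i : ℝ) = w i := by
    have hcomb : ∑ i, ((q i : ℝ)) • z i = ∑ i, w i • z i := by
      rw [hwz]
      refine bR.ext_elem fun k => ?_
      simp only [map_sum, map_smul, Finsupp.coe_finset_sum, Finsupp.coe_smul,
        Finset.sum_apply, Pi.smul_apply, smul_eq_mul]
      have h3 : ∀ i, (bR.repr (z i)) k = ((b.repr (y i) k : ℤ) : ℝ) := fun i => by
        rw [← hyz i, hrepr]
      calc ∑ i, (q i : ℝ) * (bR.repr (z i)) k
          = ∑ i, ((q i * ((b.repr (y i) k : ℤ) : ℚ) : ℚ) : ℝ) := by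
            refine Finset.sum_congr rfl fun i _ => ?_
            rw [h3 i]; push_cast; ring
        _ = (((b.repr x k : ℤ) : ℚ) : ℝ) := by exact_mod_cast congrArg (fun r : ℚ => (r : ℝ)) (hqco k)
        _ = (bR.repr ((1:ℝ) ⊗ₜ[ℤ] x)) k := by rw [hrepr]; norm_cast
    have := hAI.eq_of_sum_eq_sum (w₁ := fun i => (q i : ℝ)) (w₂ := w)
      (by rw [hw1]; exact_mod_cast hq1) hcomb
    exact fun i => this i (Finset.mem_univ i)
  have hq0 : ∀ i, 0 ≤ q i := fun i => by
    have : (0:ℝ) ≤ (q i : ℝ) := (hqw i) ▸ (hw0 i).le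
    exact_mod_cast this
  -- clear denominators
  set m : ℕ := ∏ i, (q i).den with hm
  have hmpos : 0 < m := Finset.prod_pos fun i _ => (q i).pos
  have ha : ∀ i, ∃ a : ℕ, (a : ℚ) = q i * m := by
    intro i
    obtain ⟨c, hc⟩ := Finset.dvd_prod_of_mem (fun i => (q i).den) (Finset.mem_univ i)
    have hden : (((q i).den : ℚ)) ≠ 0 := by
      exact_mod_cast (q i).den_nz
    have hqden : q i * ((q i).den : ℚ) = ((q i).num : ℚ) := by
      nth_rewrite 1 [← Rat.num_div_den (q i)]
      exact div_mul_cancel₀ _ hden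
    have hint : (((q i).num * c : ℤ) : ℚ) = q i * m := by
      push_cast [hm, hc]
      rw [← mul_assoc, hqden]
    have hnn : (0:ℤ) ≤ (q i).num * c := by
      have : (0:ℚ) ≤ (((q i).num * c : ℤ) : ℚ) := by
        rw [hint]
        exact mul_nonneg (hq0 i) (by positivity)
      exact_mod_cast this
    refine ⟨((q i).num * c).toNat, ?_⟩
    rw [← hint]
    exact_mod_cast Int.toNat_of_nonneg hnn
  choose a haq using ha
  have hsum_a : ∑ i, a i = m := by
    have : ((∑ i, a i : ℕ) : ℚ) = ((m:ℕ) : ℚ) := by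
      push_cast
      rw [Finset.sum_congr rfl fun i _ => haq i, ← Finset.sum_mul, hq1, one_mul]
    exact_mod_cast this
  -- the integral relation m • x = ∑ a i • y i
  have hrel : m • x = ∑ i, a i • y i := by
    refine b.ext_elem fun k => ?_
    have hk : ∑ i, (a i : ℚ) * ((b.repr (y i) k : ℤ) : ℚ) = (m : ℚ) * ((b.repr x k : ℤ) : ℚ) := by
      rw [Finset.sum_congr rfl fun i _ => by rw [haq i]]
      rw [Finset.sum_congr rfl fun i _ => (by ring :
        q i * (m:ℚ) * ((b.repr (y i) k : ℤ) : ℚ) = (m:ℚ) * (q i * ((b.repr (y i) k : ℤ) : ℚ)))]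
      rw [← Finset.mul_sum, hqco k]
    have hkZ : ∑ i, (a i : ℤ) * b.repr (y i) k = (m : ℤ) * b.repr x k := by
      exact_mod_cast hk
    simp only [map_nsmul, map_sum, Finsupp.coe_finset_sum, Finsupp.coe_smul,
      Finset.sum_apply, Pi.smul_apply, Finsupp.smul_apply, smul_eq_mul, nsmul_eq_mul,
      Pi.mul_apply, Pi.natCast_apply]
    exact_mod_cast hkZ.symm
  refine ⟨m, hmpos, ?_⟩
  rw [hrel, ← hsum_a]
  exact sum_nsmul_mem_foldSum Finset.univ a y fun i _ => hyK i


theorem convex_lattice_characterizations (M : Type*) [AddCommGroup M]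
    [Module.Free ℤ M] [Module.Finite ℤ M] (K : Set M) :
    ((∀ m : ℕ, 0 < m → ∀ x : M, x ∈ Submodule.span ℤ K → m • x ∈ foldSum m K → x ∈ K) ↔
      K = (Submodule.span ℤ K : Set M) ∩
        (fun x : M => ((1 : ℝ) ⊗ₜ[ℤ] x : ℝ ⊗[ℤ] M)) ⁻¹'
          (convexHull ℝ ((fun y : M => ((1 : ℝ) ⊗ₜ[ℤ] y : ℝ ⊗[ℤ] M)) '' K))) ∧
    ((K = (Submodule.span ℤ K : Set M) ∩
        (fun x : M => ((1 : ℝ) ⊗ₜ[ℤ] x : ℝ ⊗[ℤ] M)) ⁻¹'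
          (convexHull ℝ ((fun y : M => ((1 : ℝ) ⊗ₜ[ℤ] y : ℝ ⊗[ℤ] M)) '' K))) ↔
      ∃ (N : Submodule ℤ M) (Δ : Set (ℝ ⊗[ℤ] M)), Convex ℝ Δ ∧
        K = (N : Set M) ∩ (fun x : M => ((1 : ℝ) ⊗ₜ[ℤ] x : ℝ ⊗[ℤ] M)) ⁻¹' Δ) := by
  -- (3) → (1)
  have hCA : (∃ (N : Submodule ℤ M) (Δ : Set (ℝ ⊗[ℤ] M)), Convex ℝ Δ ∧
      K = (N : Set M) ∩ (fun x : M => ((1 : ℝ) ⊗ₜ[ℤ] x : ℝ ⊗[ℤ] M)) ⁻¹' Δ) →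
      (∀ m : ℕ, 0 < m → ∀ x : M, x ∈ Submodule.span ℤ K → m • x ∈ foldSum m K → x ∈ K) := by
    rintro ⟨N, Δ, hΔ, hK⟩ m hm x hxsp hxf
    obtain ⟨f, hfK, hfs⟩ := hxf
    have hxN : x ∈ N := by
      have : Submodule.span ℤ K ≤ N :=
        Submodule.span_le.mpr (by rw [hK]; exact Set.inter_subset_left)
      exact this hxsp
    have hxΔ : ((1:ℝ) ⊗ₜ[ℤ] x : ℝ ⊗[ℤ] M) ∈ Δ := by
      set φ : M →ₗ[ℤ] ℝ ⊗[ℤ] M := TensorProduct.mk ℤ ℝ M 1 with hφ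
      have key : ∑ i : Fin m, ((m:ℝ)⁻¹) • φ (f i) = φ x := by
        rw [← Finset.smul_sum, ← map_sum, ← hfs, map_nsmul, smul_comm,
          ← Nat.cast_smul_eq_nsmul ℝ m, smul_smul,
          mul_inv_cancel₀ (by exact_mod_cast hm.ne' : (m:ℝ) ≠ 0), one_smul]
      have := hΔ.sum_mem (t := Finset.univ) (w := fun _ : Fin m => (m:ℝ)⁻¹)
        (z := fun i => φ (f i)) (fun i _ => by positivity)
        (by simp [Finset.card_univ, mul_inv_cancel₀ (by exact_mod_cast hm.ne' : (m:ℝ) ≠ 0)])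
        (fun i _ => by
          have := hfK i
          rw [hK] at this
          exact this.2)
      rw [key] at this
      exact this
    rw [hK]
    exact ⟨hxN, hxΔ⟩
  -- (1) → (2)
  have hAB : (∀ m : ℕ, 0 < m → ∀ x : M, x ∈ Submodule.span ℤ K → m • x ∈ foldSum m K → x ∈ K) →
      K = (Submodule.span ℤ K : Set M) ∩
        (fun x : M => ((1 : ℝ) ⊗ₜ[ℤ] x : ℝ ⊗[ℤ] M)) ⁻¹'
          (convexHull ℝ ((fun y : M => ((1 : ℝ) ⊗ₜ[ℤ] y : ℝ ⊗[ℤ] M)) '' K)) := by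
    intro hA
    refine Set.Subset.antisymm (fun x hx => ⟨Submodule.subset_span hx,
      subset_convexHull ℝ _ (Set.mem_image_of_mem _ hx)⟩) ?_
    rintro x ⟨hsp, hcv⟩
    obtain ⟨m, hm, hfold⟩ := exists_nsmul_mem_foldSum hcv
    exact hA m hm x hsp hfold
  refine ⟨⟨hAB, fun hB => hCA ⟨Submodule.span ℤ K, _, convex_convexHull ℝ _, hB⟩⟩,
    ⟨fun hB => ⟨Submodule.span ℤ K, _, convex_convexHull ℝ _, hB⟩, fun hC => hAB (hCA hC)⟩⟩
end
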